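/- Let Q be a finite quiver, M a straight representation with straightening basis B, e a dimension vector, and T_M the torus acting on Gr_e(M). Then the map sending an e-dimensional successor-closed subquiver S ⊆ Q(M,B) to the coordinate subrepresentation of M spanned by the basis vectors in S₀ is a bijection from the set of e-dimensional successor-closed subquivers of Q(M,B) onto the set of T_M-fixed points of Gr_e(M). -/

import Mathlib

open scoped Classical

noncomputable section

structure FinQuiver where
  V : Type
  A : Type
  [fV : Fintype V]
  [fA : Fintype A]
  [dV : DecidableEq V]
  [dA : DecidableEq A]
  src : A → V
  tgt : A → V

attribute [instance] FinQuiver.fV FinQuiver.fA FinQuiver.dV FinQuiver.dA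

structure QuivRep (Q : FinQuiver) where
  M : Q.V → Type
  [acg : ∀ i, AddCommGroup (M i)]
  [mod : ∀ i, Module ℂ (M i)]
  [fd : ∀ i, FiniteDimensional ℂ (M i)]
  map : ∀ a : Q.A, M (Q.src a) →ₗ[ℂ] M (Q.tgt a)

attribute [instance] QuivRep.acg QuivRep.mod QuivRep.fd

def QuivRep.grass {Q : FinQuiver} (R : QuivRep Q) (e : Q.V → ℕ) :
    Set (∀ i, Submodule ℂ (R.M i)) :=
  {U | (∀ a, (U (Q.src a)).map (R.map a) ≤ U (Q.tgt a)) ∧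
    ∀ i, Module.finrank ℂ (U i) = e i}

def QuivRep.FlexAt {Q : FinQuiver} (R : QuivRep Q) (e : Q.V → ℕ) (i : Q.V) : Prop :=
  {W : Submodule ℂ (R.M i) | ∃ U ∈ R.grass e, U i = W}.Infinite

def QuivRep.Flex {Q : FinQuiver} (R : QuivRep Q) (e : Q.V → ℕ) : Prop :=
  ∀ i, R.FlexAt e i

/-- A standard basis of a direct sum of windings of trees: a basis of each `M^(i)` such
that every `M_a` sends each basis vector either to zero or to a nonzero scalar multiple
of a basis vector, and (winding condition) no two basis vectors are sent by `M_a` to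
multiples of the same basis vector. -/
structure ForestBasis {Q : FinQuiver} (R : QuivRep Q) where
  κ : Q.V → Type
  [fκ : ∀ i, Fintype (κ i)]
  [dκ : ∀ i, DecidableEq (κ i)]
  bas : ∀ i, Module.Basis (κ i) ℂ (R.M i)
  next : ∀ a : Q.A, κ (Q.src a) → Option (κ (Q.tgt a))
  coef : ∀ a : Q.A, κ (Q.src a) → ℂ
  map_bas : ∀ a k, R.map a (bas (Q.src a) k) =
      Option.elim (next a k) 0 fun k' => coef a k • bas (Q.tgt a) k'
  coef_ne : ∀ a k, (next a k).isSome → coef a k ≠ 0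
  next_inj : ∀ a k l, (next a k).isSome → next a k = next a l → k = l

attribute [instance] ForestBasis.fκ ForestBasis.dκ

namespace ForestBasis

variable {Q : FinQuiver} {R : QuivRep Q} (F : ForestBasis R)

/-- The set of all basis vectors (the vertex set of the coefficient quiver). -/
abbrev B := Σ i : Q.V, F.κ i

instance : Fintype F.B := by unfold ForestBasis.B; infer_instance

/-- Adjacency in the coefficient quiver `Q(M,B)`. -/
def adj (p q : F.B) : Prop :=
  ∃ (a : Q.A) (k : F.κ (Q.src a)) (k' : F.κ (Q.tgt a)),
    F.next a k = some k' ∧ p = ⟨Q.src a, k⟩ ∧ q = ⟨Q.tgt a, k'⟩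

/-- The number of connected components of the coefficient quiver; for a forest this is
the number of indecomposable direct summands of `M`. -/
def numComp : ℕ := Nat.card (Quot F.adj)

/-- The coefficient quiver is a forest: the number of vertices equals the number of
edges plus the number of connected components (i.e. every component is a tree). -/
def IsForest : Prop :=
  Fintype.card F.B =
    Nat.card {e : Σ a : Q.A, F.κ (Q.src a) // (F.next e.1 e.2).isSome} + F.numComp

/-- The linear automorphism of `M^(i)` induced by a grading `wt` and `z ∈ ℂ*`:
each basis vector `b` is scaled by `z ^ wt b`. -/
def gradeMap (wt : F.B → ℤ) (z : ℂˣ) (i : Q.V) : R.M i →ₗ[ℂ] R.M i :=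
  (F.bas i).constr ℂ fun k => ((z ^ wt ⟨i, k⟩ : ℂˣ) : ℂ) • F.bas i k

/-- The induced action of `z ∈ ℂ*` on tuples of subspaces. -/
def gact (wt : F.B → ℤ) (z : ℂˣ) (U : ∀ i, Submodule ℂ (R.M i)) :
    ∀ i, Submodule ℂ (R.M i) :=
  fun i => (U i).map (F.gradeMap wt z i)

/-- A grading is `e`-admissible if its `ℂ*`-action preserves the quiver Grassmannian. -/
def Admissible (e : Q.V → ℕ) (wt : F.B → ℤ) : Prop :=
  ∀ (z : ℂˣ), ∀ U ∈ R.grass e, F.gact wt z U ∈ R.grass e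

/-- A grading is constructible if every arrow has a fixed weight. -/
def Constructible (wt : F.B → ℤ) : Prop :=
  ∃ wtA : Q.A → ℤ, ∀ (a : Q.A) (k : F.κ (Q.src a)) (k' : F.κ (Q.tgt a)),
    F.next a k = some k' → wt ⟨Q.tgt a, k'⟩ = wt ⟨Q.src a, k⟩ + wtA a

/-- The action of a higher-rank torus obtained by combining several gradings. -/
def mgradeMap {r : ℕ} (w : Fin r → (F.B → ℤ)) (t : Fin r → ℂˣ) (i : Q.V) :
    R.M i →ₗ[ℂ] R.M i :=
  (F.bas i).constr ℂ fun k => ((∏ j, t j ^ w j ⟨i, k⟩ : ℂˣ) : ℂ) • F.bas i k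

def mgact {r : ℕ} (w : Fin r → (F.B → ℤ)) (t : Fin r → ℂˣ)
    (U : ∀ i, Submodule ℂ (R.M i)) : ∀ i, Submodule ℂ (R.M i) :=
  fun i => (U i).map (F.mgradeMap w t i)

/-- The torus `(ℂ*)^r` acts faithfully on `Gr_e(M)` via the gradings `w`. -/
def Faithful {r : ℕ} (e : Q.V → ℕ) (w : Fin r → (F.B → ℤ)) : Prop :=
  ∀ t : Fin r → ℂˣ, (∀ U ∈ R.grass e, F.mgact w t U = U) → t = 1

end ForestBasis

end

noncomputable section

/-- The supporting arrows of `M`: arrows of `Q` on which `M` is nonzero. -/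
abbrev QuivRep.SuppA {Q : FinQuiver} (R : QuivRep Q) := {a : Q.A // R.map a ≠ 0}

/-- Extension by `1` on non-supporting arrows of a tuple indexed by supporting arrows. -/
def QuivRep.nuExt {Q : FinQuiver} (R : QuivRep Q) (ν : R.SuppA → ℂˣ) (a : Q.A) : ℂˣ :=
  if h : R.map a ≠ 0 then ν ⟨a, h⟩ else 1

/-- A straightening basis for a representation `M`: a basis of `⊕ᵢ M^(i)` whose
coefficient quiver is a disjoint union of `d` equioriented strings ("segments").
The `j`-th segment has `len j` basis vectors `b_{j,0}, …, b_{j,len j - 1}`, the vector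
`b_{j,k}` lies over the vertex `vtx j k` of `Q`, and for `k+1 < len j` the arrow
`arrOf j k` of `Q` carries `b_{j,k}` to `b_{j,k+1}`; all other structure maps vanish
on basis vectors. -/
structure StraightBasis {Q : FinQuiver} (R : QuivRep Q) where
  d : ℕ
  len : Fin d → ℕ
  len_pos : ∀ j, 0 < len j
  vtx : (j : Fin d) → Fin (len j) → Q.V
  arrOf : (j : Fin d) → Fin (len j) → Q.A
  arr_src : ∀ (j : Fin d) (k : Fin (len j)), (k : ℕ) + 1 < len j →
    Q.src (arrOf j k) = vtx j k
  arr_tgt : ∀ (j : Fin d) (k : Fin (len j)) (h : (k : ℕ) + 1 < len j),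
    Q.tgt (arrOf j k) = vtx j ⟨(k : ℕ) + 1, h⟩
  bas : ∀ i, Module.Basis {p : Σ j : Fin d, Fin (len j) // vtx p.1 p.2 = i} ℂ (R.M i)
  map_bas : ∀ (a : Q.A) (p : {p : Σ j : Fin d, Fin (len j) // vtx p.1 p.2 = Q.src a}),
      R.map a (bas (Q.src a) p) =
        if h : (p.1.2 : ℕ) + 1 < len p.1.1 ∧ arrOf p.1.1 p.1.2 = a then
          bas (Q.tgt a) ⟨⟨p.1.1, ⟨(p.1.2 : ℕ) + 1, h.1⟩⟩,
            (arr_tgt p.1.1 p.1.2 h.1).symm.trans (congrArg Q.tgt h.2)⟩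
        else 0

/-- `M` is straight if it admits a straightening basis. -/
def QuivRep.IsStraight {Q : FinQuiver} (R : QuivRep Q) : Prop :=
  Nonempty (StraightBasis R)

namespace StraightBasis

variable {Q : FinQuiver} {R : QuivRep Q} (S : StraightBasis R)

/-- The set of basis vectors: the vertex set of the coefficient quiver. -/
abbrev B (S : StraightBasis R) := Σ j : Fin S.d, Fin (S.len j)

instance : Fintype S.B := by unfold StraightBasis.B; infer_instance

/-- The vertex of `Q` over which a basis vector lies. -/
def over' (p : S.B) : Q.V := S.vtx p.1 p.2

/-- The fibre of the basis over a vertex of `Q`. -/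
abbrev fiber (i : Q.V) := {p : S.B // S.over' p = i}

/-- The basis vector corresponding to `p`. -/
def bv (p : S.B) : R.M (S.over' p) := S.bas (S.over' p) ⟨p, rfl⟩

/-- The successor of a basis vector in the coefficient quiver (if any). -/
def succOf (p : S.B) : Option S.B :=
  if h : (p.2 : ℕ) + 1 < S.len p.1 then some ⟨p.1, ⟨(p.2 : ℕ) + 1, h⟩⟩ else none

/-- The predecessor of a basis vector in the coefficient quiver (if any). -/
def predOf (p : S.B) : Option S.B :=
  if _ : 0 < (p.2 : ℕ) then
    some ⟨p.1, ⟨(p.2 : ℕ) - 1, lt_of_le_of_lt (Nat.sub_le _ _) p.2.isLt⟩⟩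
  else none

/-- The torus `T_M = (ℂ*)^{d+c}`: one coordinate `γ_j` for each segment and one
coordinate `ν_a` for each arrow `a` of `Q` in the support of `M`. -/
abbrev Torus (S : StraightBasis R) := (Fin S.d → ℂˣ) × (R.SuppA → ℂˣ)



/-- The character by which a torus element scales the basis vector `p`: the initial
coordinate `γ_j` of its segment times the product of the `ν`'s along the arrows of the
segment preceding `p`. -/
def twt (t : S.Torus) (p : S.B) : ℂˣ :=
  t.1 p.1 * ∏ m ∈ (Finset.range (p.2 : ℕ)).attach,
    R.nuExt t.2 (S.arrOf p.1 ⟨m.1, lt_trans (Finset.mem_range.mp m.2) p.2.isLt⟩)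

/-- The linear action of a torus element on `M^(i)`. -/
def tmap (t : S.Torus) (i : Q.V) : R.M i →ₗ[ℂ] R.M i :=
  (S.bas i).constr ℂ fun p => ((S.twt t p.1 : ℂˣ) : ℂ) • S.bas i p

/-- The action of the torus `T_M` on tuples of subspaces. -/
def tact (t : S.Torus) (U : ∀ i, Submodule ℂ (R.M i)) : ∀ i, Submodule ℂ (R.M i) :=
  fun i => (U i).map (S.tmap t i)

/-- The `T_M`-fixed points of the quiver Grassmannian. -/
def fixedPts (e : Q.V → ℕ) : Set (∀ i, Submodule ℂ (R.M i)) :=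
  {U | U ∈ R.grass e ∧ ∀ t : S.Torus, S.tact t U = U}

/-- The `T_M`-orbit of a point. -/
def orbit (U : ∀ i, Submodule ℂ (R.M i)) : Set (∀ i, Submodule ℂ (R.M i)) :=
  {W | ∃ t : S.Torus, W = S.tact t U}

/-- The (algebraic) cocharacter of `T_M` given by a pair of integer vectors. -/
def cochar (mγ : Fin S.d → ℤ) (mν : R.SuppA → ℤ) (z : ℂˣ) : S.Torus :=
  (fun j => z ^ mγ j, fun a => z ^ mν a)

/-- A subset `O` of the quiver Grassmannian is a one-dimensional `T_M`-orbit if it is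
the orbit of a point of `Gr_e(M)`, is infinite, and coincides with the orbit of any of
its points under a single cocharacter of `T_M`. -/
def IsOneDimOrbitIn (e : Q.V → ℕ) (O : Set (∀ i, Submodule ℂ (R.M i))) : Prop :=
  (∃ U ∈ R.grass e, O = S.orbit U) ∧ O.Infinite ∧
  ∀ x ∈ O, ∃ (mγ : Fin S.d → ℤ) (mν : R.SuppA → ℤ),
    O = {W | ∃ z : ℂˣ, W = S.tact (S.cochar mγ mν z) x}

/-- The coordinate subrepresentation spanned by the basis vectors in `K`. -/
def coordSub (K : Set S.B) : ∀ i, Submodule ℂ (R.M i) :=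
  fun i => Submodule.span ℂ (⇑(S.bas i) '' {q : S.fiber i | q.1 ∈ K})

/-- The set of basis vectors lying in a given coordinate subrepresentation. -/
def coordSet (V : ∀ i, Submodule ℂ (R.M i)) : Set S.B :=
  {p | S.bv p ∈ V (S.over' p)}

/-- A subset of the basis is successor closed if it is closed under taking successors
in the coefficient quiver. -/
def SuccClosed (K : Set S.B) : Prop :=
  ∀ p ∈ K, ∀ q, S.succOf p = some q → q ∈ K

/-- A subset of the basis is `e`-dimensional if it has `e i` elements over each
vertex `i` of `Q`. -/
def EDim (e : Q.V → ℕ) (K : Set S.B) : Prop :=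
  ∀ i, Nat.card {p : S.B // p ∈ K ∧ S.over' p = i} = e i

/-- The `ℂ*`-action on `M^(i)` induced by a grading of the basis. -/
def zmap (wt : S.B → ℤ) (z : ℂˣ) (i : Q.V) : R.M i →ₗ[ℂ] R.M i :=
  (S.bas i).constr ℂ fun p => ((z ^ wt p.1 : ℂˣ) : ℂ) • S.bas i p

/-- The `ℂ*`-action on tuples of subspaces induced by a grading. -/
def zact (wt : S.B → ℤ) (z : ℂˣ) (U : ∀ i, Submodule ℂ (R.M i)) :
    ∀ i, Submodule ℂ (R.M i) :=
  fun i => (U i).map (S.zmap wt z i)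

/-- The position of a basis vector in a chosen ordering of its fibre. -/
def ordIdx (ord : ∀ i, S.fiber i ≃ Fin (Fintype.card (S.fiber i))) (p : S.B) : ℕ :=
  (ord (S.over' p) ⟨p, rfl⟩ : ℕ)

/-- (SA1): over each arrow, endpoints of segments come later in the order than basis
vectors with outgoing arrows. -/
def SA1 (ord : ∀ i, S.fiber i ≃ Fin (Fintype.card (S.fiber i))) : Prop :=
  ∀ (a : Q.A) (p q : S.fiber (Q.src a)),
    R.map a (S.bas (Q.src a) p) = 0 → R.map a (S.bas (Q.src a) q) ≠ 0 →
      S.ordIdx ord q.1 < S.ordIdx ord p.1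

/-- (SA2): over each arrow, the structure maps are order preserving. -/
def SA2 (ord : ∀ i, S.fiber i ≃ Fin (Fintype.card (S.fiber i))) : Prop :=
  ∀ (a : Q.A) (p q : S.fiber (Q.src a)) (p' q' : S.fiber (Q.tgt a)),
    R.map a (S.bas (Q.src a) p) = S.bas (Q.tgt a) p' →
    R.map a (S.bas (Q.src a) q) = S.bas (Q.tgt a) q' →
      S.ordIdx ord q.1 < S.ordIdx ord p.1 → S.ordIdx ord q'.1 < S.ordIdx ord p'.1

/-- (AG1): within each fibre, the grading strictly increases with the order. -/
def AG1 (ord : ∀ i, S.fiber i ≃ Fin (Fintype.card (S.fiber i))) (wt : S.B → ℤ) : Prop :=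
  ∀ (i : Q.V) (p q : S.fiber i), S.ordIdx ord q.1 < S.ordIdx ord p.1 → wt q.1 < wt p.1

/-- (AG2): each arrow of `Q` has a fixed weight for the grading. -/
def AG2 (wt : S.B → ℤ) (wtA : Q.A → ℤ) : Prop :=
  ∀ (a : Q.A) (p : S.fiber (Q.src a)) (p' : S.fiber (Q.tgt a)),
    R.map a (S.bas (Q.src a) p) = S.bas (Q.tgt a) p' → wt p'.1 = wt p.1 + wtA a

/-- The lowest-weight component of a vector `u ∈ M^(i)` with respect to a grading. -/
def lead (wt : S.B → ℤ) (i : Q.V) (u : R.M i) : R.M i :=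
  if h : (((S.bas i).repr u).support).Nonempty then
    ∑ p ∈ ((S.bas i).repr u).support.filter
        (fun p => wt p.1 =
          ((((S.bas i).repr u).support.image fun q => wt q.1).min' (h.image _))),
      ((S.bas i).repr u) p • S.bas i p
  else 0

/-- The Bialynicki-Birula limit `lim_{z→0} z.U` of a tuple of subspaces under the
`ℂ*`-action induced by the grading `wt`: the span of the lowest-weight components of
the nonzero vectors. -/
def bblim (wt : S.B → ℤ) (U : ∀ i, Submodule ℂ (R.M i)) : ∀ i, Submodule ℂ (R.M i) :=
  fun i => Submodule.span ℂ {v | ∃ u ∈ U i, u ≠ 0 ∧ v = S.lead wt i u}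

/-- The attracting set of a fixed point `V` for the `ℂ*`-action induced by `wt`. -/
def attrSet (wt : S.B → ℤ) (e : Q.V → ℕ) (V : ∀ i, Submodule ℂ (R.M i)) :
    Set (∀ i, Submodule ℂ (R.M i)) :=
  {U | U ∈ R.grass e ∧ S.bblim wt U = V}

/-- The pair `(p, q)` is an *initial parameter* `μ^{(i)}_{ℓ,k}` (`k ↔ p ∈ K`,
`ℓ ↔ q ∉ K`) for the coordinate subrepresentation given by `K`. -/
def IsInitial (ord : ∀ i, S.fiber i ≃ Fin (Fintype.card (S.fiber i)))
    (K : Set S.B) (p q : S.B) : Prop :=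
  p ∈ K ∧ q ∉ K ∧ S.over' p = S.over' q ∧ S.ordIdx ord p < S.ordIdx ord q ∧
  (S.predOf p = none ∨ ∃ p₀, S.predOf p = some p₀ ∧ p₀ ∉ K) ∧
  (∀ q', S.succOf q = some q' → q' ∉ K →
    ∃ p', S.succOf p = some p' ∧ S.over' p' = S.over' q')

/-- The number of initial parameters of the coordinate subrepresentation given by `K`. -/
def numInitial (ord : ∀ i, S.fiber i ≃ Fin (Fintype.card (S.fiber i)))
    (K : Set S.B) : ℕ :=
  Nat.card {pq : S.B × S.B // S.IsInitial ord K pq.1 pq.2}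

end StraightBasis

end

noncomputable section Aux

namespace StraightBasis

variable {Q : FinQuiver} {R : QuivRep Q} (S : StraightBasis R)

/-- The structure map along a segment arrow is nonzero. -/
lemma map_arrOf_ne_zero (j : Fin S.d) (k : Fin (S.len j)) (h : (k : ℕ) + 1 < S.len j) :
    R.map (S.arrOf j k) ≠ 0 := by
  intro h0
  have hs := S.arr_src j k h
  have hmb := S.map_bas (S.arrOf j k) ⟨⟨j, k⟩, hs.symm⟩
  rw [dif_pos ⟨h, rfl⟩, h0] at hmb
  exact (S.bas _).ne_zero _ (by simpa using hmb.symm)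

/-- The torus characters separate distinct basis vectors. -/
lemma twt_sep {p q : S.B} (h : p ≠ q) : ∃ t : S.Torus, S.twt t p ≠ S.twt t q := by
  obtain ⟨j, k⟩ := p
  obtain ⟨j', k'⟩ := q
  by_cases hj : j = j'
  · subst hj
    have hk : (k : ℕ) ≠ (k' : ℕ) := by
      intro e
      exact h (congrArg (Sigma.mk j) (Fin.ext e))
    set z2 : ℂˣ := Units.mk0 2 (by norm_num) with hz2
    refine ⟨(1, fun _ => z2), ?_⟩
    have key : ∀ m : Fin (S.len j), S.twt (1, fun _ => z2) ⟨j, m⟩ = z2 ^ (m : ℕ) := by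
      intro m
      have hfac : ∀ x ∈ (Finset.range (m : ℕ)).attach,
          R.nuExt (fun _ => z2)
            (S.arrOf j ⟨x.1, lt_trans (Finset.mem_range.mp x.2) m.isLt⟩) = z2 := by
        intro x _
        have hx : (x.1 : ℕ) < (m : ℕ) := Finset.mem_range.mp x.2
        have hlt : (x.1 : ℕ) + 1 < S.len j := by
          have := m.isLt; omega
        rw [QuivRep.nuExt, dif_pos (S.map_arrOf_ne_zero j _ hlt)]
      rw [twt, Finset.prod_congr rfl hfac, Finset.prod_const, Finset.card_attach,
        Finset.card_range]
      simp
    rw [key k, key k']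
    intro hEq
    apply hk
    have hv := congrArg Units.val hEq
    simp only [Units.val_pow_eq_pow_val, hz2, Units.val_mk0] at hv
    have hNat : ((2 ^ (k : ℕ) : ℕ) : ℂ) = ((2 ^ (k' : ℕ) : ℕ) : ℂ) := by push_cast; exact hv
    exact Nat.pow_right_injective le_rfl (Nat.cast_injective hNat)
  · set z2 : ℂˣ := Units.mk0 2 (by norm_num) with hz2
    refine ⟨(fun r => if r = j then z2 else 1, fun _ => 1), ?_⟩
    have hnu : ∀ a : Q.A, R.nuExt (fun _ => (1 : ℂˣ)) a = 1 := by
      intro a; rw [QuivRep.nuExt]; split <;> rfl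
    have key : ∀ (j₀ : Fin S.d) (m : Fin (S.len j₀)),
        S.twt (fun r => if r = j then z2 else 1, fun _ => 1) ⟨j₀, m⟩ =
          (if j₀ = j then z2 else 1) := by
      intro j₀ m
      rw [twt]
      simp only [hnu, Finset.prod_const_one, mul_one]
    rw [key j k, key j' k', if_pos rfl, if_neg (fun e => hj e.symm)]
    intro hEq
    have hv := congrArg Units.val hEq
    simp only [hz2, Units.val_mk0, Units.val_one] at hv
    norm_num at hv

lemma tmap_bas (t : S.Torus) (i : Q.V) (q : {p : S.B // S.vtx p.1 p.2 = i}) :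
    S.tmap t i (S.bas i q) = ((S.twt t q.1 : ℂˣ) : ℂ) • S.bas i q := by
  rw [tmap, Module.Basis.constr_basis]

lemma repr_tmap (t : S.Torus) (i : Q.V) (u : R.M i) (q : {p : S.B // S.vtx p.1 p.2 = i}) :
    (S.bas i).repr (S.tmap t i u) q = ((S.twt t q.1 : ℂˣ) : ℂ) * (S.bas i).repr u q := by
  have hmain :
      (Finsupp.lapply q ∘ₗ ((S.bas i).repr : R.M i →ₗ[ℂ] _) ∘ₗ S.tmap t i) =
        ((S.twt t q.1 : ℂˣ) : ℂ) •
          ((Finsupp.lapply q : ({p : S.B // S.vtx p.1 p.2 = i} →₀ ℂ) →ₗ[ℂ] ℂ) ∘ₗ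
            ((S.bas i).repr : R.M i →ₗ[ℂ] _)) := by
    apply (S.bas i).ext
    intro p
    simp only [LinearMap.coe_comp, Function.comp_apply, LinearEquiv.coe_coe,
      LinearMap.smul_apply, Finsupp.lapply_apply, S.tmap_bas, map_smul,
      Module.Basis.repr_self, Finsupp.smul_apply, smul_eq_mul]
    by_cases hpq : p = q
    · subst hpq; simp
    · simp [Finsupp.single_apply, hpq]
  have := congrArg (fun f => f u) hmain
  simpa using this

/-- Components of elements of a torus-fixed tuple of subspaces lie in the subspaces. -/
lemma comp_mem (U : ∀ i, Submodule ℂ (R.M i)) (hU : ∀ t : S.Torus, S.tact t U = U)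
    (i : Q.V) :
    ∀ (n : ℕ) (u : R.M i), u ∈ U i → ((S.bas i).repr u).support.card ≤ n →
      ∀ p, ((S.bas i).repr u) p • S.bas i p ∈ U i := by
  intro n
  induction n with
  | zero =>
    intro u _ hc p
    have hsupp : ((S.bas i).repr u).support = ∅ :=
      Finset.card_eq_zero.mp (Nat.le_zero.mp hc)
    have hp : ((S.bas i).repr u) p = 0 := by
      by_contra hne
      exact absurd (Finsupp.mem_support_iff.mpr hne) (by simp [hsupp])
    rw [hp, zero_smul]; exact zero_mem _
  | succ n ih =>
    intro u hu hc p
    by_cases hp : p ∈ ((S.bas i).repr u).support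
    · by_cases hq : ∃ q ∈ ((S.bas i).repr u).support, q ≠ p
      · obtain ⟨q, hqs, hqp⟩ := hq
        have hne : p.1 ≠ q.1 := fun e => hqp (Subtype.ext e.symm)
        obtain ⟨t, ht⟩ := S.twt_sep hne
        set c : ℂ := ((S.twt t q.1 : ℂˣ) : ℂ) with hc'
        have htU : S.tmap t i u ∈ U i := by
          have h1 : S.tact t U i = U i := congrFun (hU t) i
          rw [← h1]
          exact Submodule.mem_map_of_mem hu
        set w : R.M i := S.tmap t i u - c • u with hw'
        have hw : w ∈ U i := sub_mem htU (Submodule.smul_mem _ _ hu)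
        have hrepr : ∀ r, (S.bas i).repr w r =
            (((S.twt t r.1 : ℂˣ) : ℂ) - c) * (S.bas i).repr u r := by
          intro r
          rw [hw', map_sub, map_smul, Finsupp.sub_apply, Finsupp.smul_apply,
            S.repr_tmap, smul_eq_mul, sub_mul]
        have hsub : ((S.bas i).repr w).support ⊆ ((S.bas i).repr u).support.erase q := by
          intro r hr
          rw [Finsupp.mem_support_iff, hrepr r] at hr
          rw [Finset.mem_erase, Finsupp.mem_support_iff]
          constructor
          · rintro rfl
            rw [← hc', sub_self, zero_mul] at hr
            exact hr rfl
          · intro h0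
            rw [h0, mul_zero] at hr
            exact hr rfl
        have hcard : ((S.bas i).repr w).support.card ≤ n := by
          have h1 := Finset.card_le_card hsub
          have h2 := Finset.card_erase_of_mem hqs
          omega
        have hcomp := ih w hw hcard p
        rw [hrepr p] at hcomp
        have hd : (((S.twt t p.1 : ℂˣ) : ℂ) - c) ≠ 0 :=
          sub_ne_zero.mpr (fun e => ht (Units.ext e))
        have := Submodule.smul_mem (U i) (((S.twt t p.1 : ℂˣ) : ℂ) - c)⁻¹ hcomp
        rwa [smul_smul, ← mul_assoc, inv_mul_cancel₀ hd, one_mul] at this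
      · push_neg at hq
        have hsupp : ((S.bas i).repr u).support = {p} :=
          Finset.eq_singleton_iff_unique_mem.mpr ⟨hp, hq⟩
        have hu' : u = ((S.bas i).repr u) p • S.bas i p := by
          conv_lhs => rw [← (S.bas i).linearCombination_repr u]
          rw [Finsupp.linearCombination_apply, Finsupp.sum, hsupp, Finset.sum_singleton]
        rw [← hu']; exact hu
    · rw [Finsupp.notMem_support_iff.mp hp, zero_smul]; exact zero_mem _

lemma bas_mem_iff (U : ∀ i, Submodule ℂ (R.M i)) {i : Q.V} (p : S.B)
    (h : S.vtx p.1 p.2 = i) :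
    S.bas i ⟨p, h⟩ ∈ U i ↔ S.bv p ∈ U (S.over' p) := by
  subst h; exact Iff.rfl

lemma bas_mem_coordSub_iff {K : Set S.B} {i : Q.V} (q : S.fiber i) :
    S.bas i q ∈ S.coordSub K i ↔ q.1 ∈ K := by
  rw [show S.coordSub K i = Submodule.span ℂ (⇑(S.bas i) '' {q : S.fiber i | q.1 ∈ K})
    from rfl]
  exact (S.bas i).self_mem_span_image

lemma finrank_coordSub (K : Set S.B) (i : Q.V) :
    Module.finrank ℂ (S.coordSub K i) = Nat.card {p : S.B // p ∈ K ∧ S.over' p = i} := by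
  have hli : LinearIndependent ℂ (fun q : {q : S.fiber i // q.1 ∈ K} => S.bas i q.1) :=
    (S.bas i).linearIndependent.comp _ Subtype.val_injective
  have hrange : Set.range (fun q : {q : S.fiber i // q.1 ∈ K} => S.bas i q.1) =
      ⇑(S.bas i) '' {q : S.fiber i | q.1 ∈ K} := by
    ext x
    constructor
    · rintro ⟨q, rfl⟩; exact ⟨q.1, q.2, rfl⟩
    · rintro ⟨q, hq, rfl⟩; exact ⟨⟨q, hq⟩, rfl⟩
  have hfr := finrank_span_eq_card hli
  rw [hrange] at hfr
  have hEq : S.coordSub K i =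
      Submodule.span ℂ (⇑(S.bas i) '' {q : S.fiber i | q.1 ∈ K}) := rfl
  rw [hEq, hfr]
  have e : {q : S.fiber i // q.1 ∈ K} ≃ {p : S.B // p ∈ K ∧ S.over' p = i} :=
    ⟨fun q => ⟨q.1.1, q.2, q.1.2⟩, fun p => ⟨⟨p.1, p.2.2⟩, p.2.1⟩,
      fun _ => rfl, fun _ => rfl⟩
  rw [← Nat.card_eq_fintype_card]
  exact Nat.card_congr e

/-- A torus-fixed point of the quiver Grassmannian equals the coordinate
subrepresentation on the basis vectors it contains. -/
lemma fixed_eq_coordSub (U : ∀ i, Submodule ℂ (R.M i))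
    (hU : ∀ t : S.Torus, S.tact t U = U) :
    U = S.coordSub (S.coordSet U) := by
  funext i
  apply le_antisymm
  · intro u hu
    have hcomp := S.comp_mem U hU i _ u hu le_rfl
    have hrepr := (S.bas i).linearCombination_repr u
    rw [Finsupp.linearCombination_apply, Finsupp.sum] at hrepr
    rw [← hrepr]
    apply Submodule.sum_mem
    intro q hq
    apply Submodule.smul_mem
    have h2 : ((S.bas i).repr u) q ≠ 0 := Finsupp.mem_support_iff.mp hq
    have h3 : S.bas i q ∈ U i := by
      have h4 := Submodule.smul_mem (U i) (((S.bas i).repr u) q)⁻¹ (hcomp q)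
      rwa [smul_smul, inv_mul_cancel₀ h2, one_smul] at h4
    apply Submodule.subset_span
    refine ⟨q, ?_, rfl⟩
    exact (S.bas_mem_iff U q.1 q.2).mp (by exact h3)
  · rw [show S.coordSub (S.coordSet U) i =
      Submodule.span ℂ (⇑(S.bas i) '' {q : S.fiber i | q.1 ∈ S.coordSet U}) from rfl]
    apply Submodule.span_le.mpr
    rintro x ⟨q, hq, rfl⟩
    exact (S.bas_mem_iff U q.1 q.2).mpr hq

end StraightBasis

end Aux

/-- Let `M` be a straight representation with straightening basis `B`
and `e` a dimension vector.  The map sending an `e`-dimensional successor-closed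
subquiver `S ⊆ Q(M,B)` (equivalently, a successor-closed subset `K` of the basis with
`e i` elements over each vertex `i`) to the coordinate subrepresentation spanned by its
vertices is a bijection onto the set of `T_M`-fixed points of `Gr_e(M)`. -/
theorem fixed_points_successor_closed {Q : FinQuiver} {R : QuivRep Q}
    (S : StraightBasis R) (e : Q.V → ℕ) :
    Set.BijOn S.coordSub {K : Set S.B | S.SuccClosed K ∧ S.EDim e K}
      (S.fixedPts e) := by
  have hfix : ∀ (K : Set S.B) (t : S.Torus), S.tact t (S.coordSub K) = S.coordSub K := by
    intro K t
    funext i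
    show (S.coordSub K i).map (S.tmap t i) = S.coordSub K i
    rw [show S.coordSub K i =
      Submodule.span ℂ (⇑(S.bas i) '' {q : S.fiber i | q.1 ∈ K}) from rfl]
    rw [Submodule.map_span]
    apply le_antisymm
    · apply Submodule.span_le.mpr
      rintro x ⟨y, ⟨q, hq, rfl⟩, rfl⟩
      rw [S.tmap_bas]
      exact Submodule.smul_mem _ _ (Submodule.subset_span ⟨q, hq, rfl⟩)
    · apply Submodule.span_le.mpr
      rintro x ⟨q, hq, rfl⟩
      have h1 : S.tmap t i (S.bas i q) ∈
          (⇑(S.tmap t i) '' (⇑(S.bas i) '' {q : S.fiber i | q.1 ∈ K})) :=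
        ⟨_, ⟨q, hq, rfl⟩, rfl⟩
      have h2 := Submodule.smul_mem
        (Submodule.span ℂ (⇑(S.tmap t i) '' (⇑(S.bas i) '' {q : S.fiber i | q.1 ∈ K})))
        ((S.twt t q.1 : ℂˣ) : ℂ)⁻¹ (Submodule.subset_span h1)
      rwa [S.tmap_bas, smul_smul, inv_mul_cancel₀ (Units.ne_zero _), one_smul] at h2
  refine ⟨?_, ?_, ?_⟩
  · -- MapsTo
    rintro K ⟨hSC, hED⟩
    refine ⟨⟨?_, ?_⟩, hfix K⟩
    · intro a
      rw [show S.coordSub K (Q.src a) = Submodule.span ℂ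
        (⇑(S.bas (Q.src a)) '' {q : S.fiber (Q.src a) | q.1 ∈ K}) from rfl]
      rw [Submodule.map_span]
      apply Submodule.span_le.mpr
      rintro x ⟨y, ⟨q, hq, rfl⟩, rfl⟩
      have hmb := S.map_bas a q
      by_cases hcond : ((q.1.2 : ℕ) + 1 < S.len q.1.1 ∧ S.arrOf q.1.1 q.1.2 = a)
      · rw [dif_pos hcond] at hmb
        rw [hmb]
        apply Submodule.subset_span
        refine ⟨_, ?_, rfl⟩
        exact hSC q.1 hq _ (by rw [StraightBasis.succOf, dif_pos hcond.1])
      · rw [dif_neg hcond] at hmb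
        rw [hmb]
        exact zero_mem _
    · intro i
      rw [S.finrank_coordSub]
      exact hED i
  · -- InjOn
    have key : ∀ K K' : Set S.B, S.coordSub K = S.coordSub K' → K ⊆ K' := by
      intro K K' h p hp
      have h1 : S.bv p ∈ S.coordSub K (S.over' p) :=
        Submodule.subset_span ⟨⟨p, rfl⟩, hp, rfl⟩
      rw [h] at h1
      exact (S.bas_mem_coordSub_iff (⟨p, rfl⟩ : S.fiber (S.over' p))).mp h1
    exact fun K _ K' _ h => Set.Subset.antisymm (key K K' h) (key K' K h.symm)
  · -- SurjOn
    rintro U ⟨hUg, hUf⟩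
    have hEq := S.fixed_eq_coordSub U hUf
    refine ⟨S.coordSet U, ⟨?_, ?_⟩, hEq.symm⟩
    · intro p hp q hsq
      rw [StraightBasis.succOf] at hsq
      by_cases h : (p.2 : ℕ) + 1 < S.len p.1
      · rw [dif_pos h] at hsq
        injection hsq with hq
        subst hq
        have hs : Q.src (S.arrOf p.1 p.2) = S.vtx p.1 p.2 := S.arr_src p.1 p.2 h
        have hpU : S.bas (Q.src (S.arrOf p.1 p.2)) ⟨p, hs.symm⟩ ∈
            U (Q.src (S.arrOf p.1 p.2)) := (S.bas_mem_iff U p hs.symm).mpr hp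
        have h2 : R.map (S.arrOf p.1 p.2) (S.bas (Q.src (S.arrOf p.1 p.2)) ⟨p, hs.symm⟩) ∈
            U (Q.tgt (S.arrOf p.1 p.2)) :=
          hUg.1 (S.arrOf p.1 p.2) (Submodule.mem_map_of_mem hpU)
        have hmb := S.map_bas (S.arrOf p.1 p.2) ⟨p, hs.symm⟩
        rw [dif_pos ⟨h, rfl⟩] at hmb
        rw [hmb] at h2
        exact (S.bas_mem_iff U _ _).mp h2
      · rw [dif_neg h] at hsq
        simp at hsq
    · intro i
      rw [← S.finrank_coordSub, ← congrFun hEq i]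
      exact hUg.2 i
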